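/- No nontrivial free subgroup of a free product of finitely many nontrivial finite groups is verbally closed: if F_r is a free subgroup of rank r ≥ 1 of G = G₁ * ⋯ * Gₙ with 1 < #Gᵢ < ∞, then F_r is not verbally closed in G. -/

import Mathlib

lemma toAdd_listProd {A : Type*} [AddMonoid A] (l : List (Multiplicative A)) :
    Multiplicative.toAdd l.prod = (l.map Multiplicative.toAdd).sum := by
  induction l with
  | nil => simp
  | cons a l ih => simp [ih]

lemma exists_list_decomp {ι : Type*} (G : ι → Type*) [∀ i, Group (G i)]
    (M : ℕ) (hM : ∀ i (g : G i), g ^ M = g) (h : Monoid.CoprodI G) :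
    ∃ l : List (Monoid.CoprodI G), (∀ t ∈ l, t ^ M = t) ∧ l.prod = h := by
  induction h using Monoid.CoprodI.induction_on with
  | one => exact ⟨[], by simp, by simp⟩
  | of i g =>
      refine ⟨[Monoid.CoprodI.of g], ?_, by simp⟩
      intro t ht
      simp only [List.mem_singleton] at ht
      subst ht
      rw [← map_pow, hM]
  | mul x y hx hy =>
      obtain ⟨l₁, h₁, rfl⟩ := hx
      obtain ⟨l₂, h₂, rfl⟩ := hy
      refine ⟨l₁ ++ l₂, ?_, by simp⟩
      intro t ht
      rcases List.mem_append.1 ht with h | h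
      exacts [h₁ t h, h₂ t h]

/-- A subgroup `H` of `G` is *verbally closed* if every coefficient-free equation
`w(x₁,…,xₙ) = h` with `h ∈ H` that has a solution in `G` also has a solution in `H`. -/
def VerballyClosed {G : Type*} [Group G] (H : Subgroup G) : Prop :=
  ∀ (n : ℕ) (w : FreeGroup (Fin n)) (h : G), h ∈ H →
    (∃ x : Fin n → G, FreeGroup.lift x w = h) →
    ∃ x : Fin n → G, (∀ i, x i ∈ H) ∧ FreeGroup.lift x w = h

/-- No nontrivial free subgroup of a free product of finitely many nontrivial finite
groups is verbally closed. -/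
theorem free_subgroup_not_verballyClosed {ι : Type*} [Fintype ι] [Nonempty ι]
    (G : ι → Type*) [∀ i, Group (G i)] [∀ i, Finite (G i)] [∀ i, Nontrivial (G i)]
    (H : Subgroup (Monoid.CoprodI G)) (X : Type*) [Nonempty X]
    (e : H ≃* FreeGroup X) :
    ¬ VerballyClosed H := by
  classical
  intro hvc
  set L : ℕ := Finset.univ.lcm (fun i => Nat.card (G i)) with hLdef
  have hLpos : 0 < L := by
    rw [Nat.pos_iff_ne_zero, hLdef, Ne, Finset.lcm_eq_zero_iff]
    intro h0
    obtain ⟨i, -, hi⟩ := h0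
    exact (Nat.card_pos (α := G i)).ne' hi
  set M : ℕ := L + 1 with hMdef
  have hM : ∀ i (g : G i), g ^ M = g := by
    intro i g
    have h1 : g ^ L = 1 := by
      apply orderOf_dvd_iff_pow_eq_one.mp
      exact dvd_trans (orderOf_dvd_natCard g) (Finset.dvd_lcm (Finset.mem_univ i))
    rw [hMdef, pow_succ, h1, one_mul]
  obtain ⟨x₀⟩ := ‹Nonempty X›
  set h : Monoid.CoprodI G := ↑(e.symm (FreeGroup.of x₀)) with hhdef
  obtain ⟨l, hl, hlp⟩ := exists_list_decomp G M hM h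
  set k : ℕ := l.length with hkdef
  set w : FreeGroup (Fin k) :=
    ((List.finRange k).map (fun j => (FreeGroup.of j) ^ M)).prod with hwdef
  have key : ∀ x : Fin k → Monoid.CoprodI G,
      FreeGroup.lift x w = ((List.finRange k).map (fun j => (x j) ^ M)).prod := by
    intro x
    rw [hwdef, map_list_prod, List.map_map]
    congr 1
    apply List.map_congr_left
    intro a _
    simp [map_pow]
  have hGsol : ∃ x : Fin k → Monoid.CoprodI G, FreeGroup.lift x w = h := by
    refine ⟨l.get, ?_⟩
    rw [key]
    have : (List.finRange k).map (fun j => (l.get j) ^ M) = (List.finRange k).map l.get := by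
      apply List.map_congr_left
      intro a _
      exact hl _ (l.get_mem _)
    rw [this, List.map_get_finRange, hlp]
  obtain ⟨x, hxH, hxw⟩ := hvc k w h (e.symm (FreeGroup.of x₀)).2 hGsol
  set y : Fin k → H := fun j => ⟨x j, hxH j⟩ with hydef
  have hy : ((List.finRange k).map (fun j => (y j) ^ M)).prod = e.symm (FreeGroup.of x₀) := by
    apply Subtype.ext
    have hc := map_list_prod H.subtype ((List.finRange k).map (fun j => (y j) ^ M))
    rw [List.map_map] at hc
    have h2 : (⇑H.subtype ∘ fun j => y j ^ M) = fun j => x j ^ M := by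
      funext j
      simp [hydef]
    rw [h2] at hc
    rw [show ((((List.finRange k).map (fun j => (y j) ^ M)).prod : H) : Monoid.CoprodI G)
        = H.subtype ((List.finRange k).map (fun j => (y j) ^ M)).prod from rfl, hc,
      ← key, hxw, hhdef]
  set f : FreeGroup X →* Multiplicative ℤ :=
    FreeGroup.lift (fun z => if z = x₀ then Multiplicative.ofAdd (1 : ℤ) else 1) with hfdef
  set φ : H →* Multiplicative ℤ := f.comp e.toMonoidHom with hφdef
  have hφy := congrArg φ hy
  rw [map_list_prod, List.map_map] at hφy
  have hrhs : φ (e.symm (FreeGroup.of x₀)) = Multiplicative.ofAdd (1 : ℤ) := by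
    simp [hφdef, hfdef]
  rw [hrhs] at hφy
  have hdvd : (M : ℤ) ∣ Multiplicative.toAdd
      (((List.finRange k).map (φ ∘ fun j => (y j) ^ M)).prod) := by
    rw [toAdd_listProd, List.map_map]
    apply List.dvd_sum
    intro a ha
    obtain ⟨j, -, rfl⟩ := List.mem_map.1 ha
    simp only [Function.comp_apply, map_pow, toAdd_pow]
    exact Dvd.intro _ rfl
  rw [hφy] at hdvd
  simp only [toAdd_ofAdd] at hdvd
  have : (M : ℤ) ∣ (1 : ℕ) := by exact_mod_cast hdvd
  have hM1 : M ∣ 1 := by exact_mod_cast this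
  have := Nat.le_of_dvd one_pos hM1
  omega
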